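/- If f is a polymatroid on ground set N ∪ M that is modular on N and M, i.e., f(N∪M) = f(N) + f(M) − f(N∩M), then for all A ⊆ N∖M and B ⊆ M∖N, f(A ∪ B ∪ (N∩M)) + f(N∩M) = f(A ∪ (N∩M)) + f(B ∪ (N∩M)). -/
import Mathlib


open Finset

/-- If `f` is a polymatroid on the ground set `N ∪ M` that is modular on `N` and `M`,
i.e. `f(N∪M) = f(N) + f(M) − f(N∩M)`, then for all `A ⊆ N∖M` and `B ⊆ M∖N`,
`f(A ∪ B ∪ (N∩M)) + f(N∩M) = f(A ∪ (N∩M)) + f(B ∪ (N∩M))`: all subsets of `N∖M` and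
`M∖N` are conditionally independent (in polymatroid form) given `N∩M`. -/
theorem polymatroid_modular_pair_conditional_independence
    {ι : Type} [DecidableEq ι] (N M : Finset ι) (f : Finset ι → ℝ)
    (hempty : f ∅ = 0)
    (hmono : ∀ A B : Finset ι, A ⊆ N ∪ M → B ⊆ N ∪ M → A ⊆ B → f A ≤ f B)
    (hsub : ∀ A B : Finset ι, A ⊆ N ∪ M → B ⊆ N ∪ M →
      f (A ∪ B) + f (A ∩ B) ≤ f A + f B)
    (hmod : f (N ∪ M) = f N + f M - f (N ∩ M)) :
    ∀ A B : Finset ι, A ⊆ N \ M → B ⊆ M \ N →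
      f (A ∪ B ∪ (N ∩ M)) + f (N ∩ M) = f (A ∪ (N ∩ M)) + f (B ∪ (N ∩ M)) := by
  intro A B hA hB
  have hA' : ∀ x, x ∈ A → x ∈ N ∧ x ∉ M := fun x hx => Finset.mem_sdiff.mp (hA hx)
  have hB' : ∀ x, x ∈ B → x ∈ M ∧ x ∉ N := fun x hx => Finset.mem_sdiff.mp (hB hx)
  -- set identities
  have e1 : (A ∪ (N ∩ M)) ∪ (B ∪ (N ∩ M)) = A ∪ B ∪ (N ∩ M) := by
    ext x
    simp only [Finset.mem_union, Finset.mem_inter]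
    tauto
  have e2 : (A ∪ (N ∩ M)) ∩ (B ∪ (N ∩ M)) = N ∩ M := by
    ext x
    simp only [Finset.mem_union, Finset.mem_inter]
    have := hA' x; have := hB' x
    tauto
  have e3 : (A ∪ M) ∪ N = N ∪ M := by
    ext x
    simp only [Finset.mem_union]
    have := hA' x
    tauto
  have e4 : (A ∪ M) ∩ N = A ∪ (N ∩ M) := by
    ext x
    simp only [Finset.mem_union, Finset.mem_inter]
    have := hA' x
    tauto
  have e5 : (A ∪ B ∪ (N ∩ M)) ∪ M = A ∪ M := by
    ext x
    simp only [Finset.mem_union, Finset.mem_inter]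
    have := hB' x
    tauto
  have e6 : (A ∪ B ∪ (N ∩ M)) ∩ M = B ∪ (N ∩ M) := by
    ext x
    simp only [Finset.mem_union, Finset.mem_inter]
    have := hA' x; have := hB' x
    tauto
  -- subset facts
  have sAI : A ∪ (N ∩ M) ⊆ N ∪ M := by
    intro x hx
    rcases Finset.mem_union.mp hx with h | h
    · exact Finset.mem_union_left _ (hA' x h).1
    · exact Finset.mem_union_left _ (Finset.mem_inter.mp h).1
  have sBI : B ∪ (N ∩ M) ⊆ N ∪ M := by
    intro x hx
    rcases Finset.mem_union.mp hx with h | h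
    · exact Finset.mem_union_right _ (hB' x h).1
    · exact Finset.mem_union_left _ (Finset.mem_inter.mp h).1
  have sAM : A ∪ M ⊆ N ∪ M := by
    intro x hx
    rcases Finset.mem_union.mp hx with h | h
    · exact Finset.mem_union_left _ (hA' x h).1
    · exact Finset.mem_union_right _ h
  have sABI : A ∪ B ∪ (N ∩ M) ⊆ N ∪ M := by
    intro x hx
    rcases Finset.mem_union.mp hx with h | h
    · rcases Finset.mem_union.mp h with h | h
      · exact Finset.mem_union_left _ (hA' x h).1
      · exact Finset.mem_union_right _ (hB' x h).1
    · exact Finset.mem_union_left _ (Finset.mem_inter.mp h).1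
  have sN : N ⊆ N ∪ M := Finset.subset_union_left
  have sM : M ⊆ N ∪ M := Finset.subset_union_right
  -- ≤ direction
  have h1 := hsub (A ∪ (N ∩ M)) (B ∪ (N ∩ M)) sAI sBI
  rw [e1, e2] at h1
  -- ≥ direction
  have h2 := hsub (A ∪ M) N sAM sN
  rw [e3, e4] at h2
  have h3 := hsub (A ∪ B ∪ (N ∩ M)) M sABI sM
  rw [e5, e6] at h3
  have h4 : f (N ∪ M) + f (N ∩ M) = f N + f M := by linarith [hmod]
  linarith
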